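/- Let X be a compact topological space and let f : X × [0,1] → ℝ be lower semicontinuous on X × [0,1]. Assume that for each λ > sup_{t ∈ [0,1]} inf_{x ∈ X} f(x,t), each x₀ ∈ X and each t₀ ∈ [0,1], the sets {x ∈ X : f(x,t₀) ≤ λ} and {t ∈ [0,1] : f(x₀,t) > λ} are connected. Then sup_{t ∈ [0,1]} inf_{x ∈ X} f(x,t) = inf_{x ∈ X} sup_{t ∈ [0,1]} f(x,t). -/

import Mathlib

open Filter Set Topology

theorem topological_minimax_compact_lsc
    {X : Type*} [TopologicalSpace X] [CompactSpace X]
    (f : X × unitInterval → ℝ)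
    (hlsc : LowerSemicontinuous f)
    (hconn : ∀ l : ℝ, (⨆ t : unitInterval, ⨅ x : X, (f (x, t) : EReal)) < (l : EReal) →
      ∀ x₀ : X, ∀ t₀ : unitInterval,
        IsPreconnected {x : X | f (x, t₀) ≤ l} ∧
        IsPreconnected {t : unitInterval | l < f (x₀, t)}) :
    (⨆ t : unitInterval, ⨅ x : X, (f (x, t) : EReal)) =
      ⨅ x : X, ⨆ t : unitInterval, (f (x, t) : EReal) := by
  refine le_antisymm (iSup_iInf_le_iInf_iSup _) ?_
  by_contra hlt
  rw [not_le] at hlt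
  obtain ⟨l', h1, h2⟩ := EReal.lt_iff_exists_real_btwn.mp hlt
  -- X is nonempty
  have hX : Nonempty X := by
    by_contra hempty
    rw [not_nonempty_iff] at hempty
    simp only [iInf_of_empty, iSup_const] at h1
    exact (not_top_lt h1).elim
  -- Sublevel sets in x
  set K : unitInterval → Set X := fun t => {x : X | f (x, t) ≤ l'} with hKdef
  have hKc : ∀ t, IsClosed (K t) := by
    intro t
    have : K t = (fun x : X => (x, t)) ⁻¹' (f ⁻¹' Iic l') := rfl
    rw [this]
    exact (hlsc.isClosed_preimage l').preimage (continuous_id.prodMk continuous_const)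
  have hKne : ∀ t, (K t).Nonempty := by
    intro t
    have hle : (⨅ x : X, (f (x, t) : EReal)) < (l' : EReal) :=
      lt_of_le_of_lt (le_iSup (fun t => ⨅ x : X, (f (x, t) : EReal)) t) h1
    obtain ⟨x, hx⟩ := iInf_lt_iff.mp hle
    exact ⟨x, le_of_lt (EReal.coe_lt_coe_iff.mp hx)⟩
  have hKconn : ∀ t, IsPreconnected (K t) := fun t =>
    (hconn l' h1 (Classical.arbitrary X) t).1
  have hTord : ∀ x : X, ({t : unitInterval | l' < f (x, t)}).OrdConnected := fun x =>
    ((hconn l' h1 x 0).2).ordConnected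
  -- Left and right intersection families
  set R : unitInterval → Set X := fun t => ⋂ (s) (_ : s ≤ t), K s with hRdef
  set L : unitInterval → Set X := fun t => ⋂ (s) (_ : t ≤ s), K s with hLdef
  have hRc : ∀ t, IsClosed (R t) := fun t =>
    isClosed_iInter fun s => isClosed_iInter fun _ => hKc s
  have hLc : ∀ t, IsClosed (L t) := fun t =>
    isClosed_iInter fun s => isClosed_iInter fun _ => hKc s
  have hRmono : ∀ {s t : unitInterval}, s ≤ t → R t ⊆ R s := by
    intro s t hst x hx
    exact mem_iInter₂.mpr fun u hu => mem_iInter₂.mp hx u (hu.trans hst)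
  have hLmono : ∀ {s t : unitInterval}, s ≤ t → L s ⊆ L t := by
    intro s t hst x hx
    exact mem_iInter₂.mpr fun u hu => mem_iInter₂.mp hx u (hst.trans hu)
  have hRsubK : ∀ t, R t ⊆ K t := fun t x hx => mem_iInter₂.mp hx t le_rfl
  have hLsubK : ∀ t, L t ⊆ K t := fun t x hx => mem_iInter₂.mp hx t le_rfl
  -- splitting: every point of K t lies in L t or R t
  have hsplit : ∀ t, K t ⊆ L t ∪ R t := by
    intro t x hx
    by_contra hcon
    rw [mem_union, not_or] at hcon
    obtain ⟨hnL, hnR⟩ := hcon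
    have h₁ : ∃ s₁, t ≤ s₁ ∧ l' < f (x, s₁) := by
      by_contra hc; push_neg at hc
      exact hnL (mem_iInter₂.mpr fun s hs => hc s hs)
    have h₂ : ∃ s₂, s₂ ≤ t ∧ l' < f (x, s₂) := by
      by_contra hc; push_neg at hc
      exact hnR (mem_iInter₂.mpr fun s hs => hc s hs)
    obtain ⟨s₁, hs₁, hf₁⟩ := h₁
    obtain ⟨s₂, hs₂, hf₂⟩ := h₂
    have hlt2 : l' < f (x, t) := (hTord x).out hf₂ hf₁ ⟨hs₂, hs₁⟩
    have hx' : f (x, t) ≤ l' := hx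
    exact absurd hx' (not_le.mpr hlt2)
  -- limit lemmas
  have hRlim : ∀ t : unitInterval, 0 < t → (∀ s < t, (R s).Nonempty) → (R t).Nonempty := by
    intro t ht hall
    have hne : Nonempty {s : unitInterval // s < t} := ⟨⟨0, ht⟩⟩
    have hdir : Directed (fun (a b : Set X) => a ⊇ b) (fun s : {s // s < t} => R s.1) := by
      intro a b
      rcases le_total a.1 b.1 with h | h
      · exact ⟨b, hRmono h, subset_rfl⟩
      · exact ⟨a, subset_rfl, hRmono h⟩
    obtain ⟨x, hx⟩ := IsCompact.nonempty_iInter_of_directed_nonempty_isCompact_isClosed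
      (fun s : {s // s < t} => R s.1) hdir (fun s => hall s.1 s.2)
      (fun s => (hRc s.1).isCompact) (fun s => hRc s.1)
    refine ⟨x, mem_iInter₂.mpr fun s hs => ?_⟩
    rcases lt_or_eq_of_le hs with hlt' | heq
    · exact hRsubK s (mem_iInter.mp hx ⟨s, hlt'⟩)
    · subst heq
      -- need f (x, s) ≤ l' using lower semicontinuity
      by_contra hf
      rw [hKdef] at hf
      simp only [mem_setOf_eq, not_le] at hf
      have hev : ∀ᶠ p in 𝓝 (x, s), l' < f p := hlsc (x, s) l' hf
      have htd : Tendsto (fun u : unitInterval => (x, u)) (𝓝 s) (𝓝 (x, s)) :=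
        (continuous_const.prodMk continuous_id).tendsto s
      have hev2 : ∀ᶠ u in 𝓝 s, l' < f (x, u) := htd.eventually hev
      have hnb : (𝓝[<] s).NeBot := nhdsWithin_Iio_self_neBot' ⟨0, ht⟩
      have h3 : ∀ᶠ u in 𝓝[<] s, l' < f (x, u) := hev2.filter_mono nhdsWithin_le_nhds
      obtain ⟨u, hu, hu_lt⟩ := (h3.and eventually_mem_nhdsWithin).exists
      have : x ∈ K u := hRsubK u (mem_iInter.mp hx ⟨u, hu_lt⟩)
      exact absurd this (not_le.mpr hu)
  have hLlim : ∀ t : unitInterval, t < 1 → (∀ s, t < s → (L s).Nonempty) → (L t).Nonempty := by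
    intro t ht hall
    have hne : Nonempty {s : unitInterval // t < s} := ⟨⟨1, ht⟩⟩
    have hdir : Directed (fun (a b : Set X) => a ⊇ b) (fun s : {s // t < s} => L s.1) := by
      intro a b
      rcases le_total a.1 b.1 with h | h
      · exact ⟨a, subset_rfl, hLmono h⟩
      · exact ⟨b, hLmono h, subset_rfl⟩
    obtain ⟨x, hx⟩ := IsCompact.nonempty_iInter_of_directed_nonempty_isCompact_isClosed
      (fun s : {s // t < s} => L s.1) hdir (fun s => hall s.1 s.2)
      (fun s => (hLc s.1).isCompact) (fun s => hLc s.1)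
    refine ⟨x, mem_iInter₂.mpr fun s hs => ?_⟩
    rcases lt_or_eq_of_le hs with hlt' | heq
    · exact hLsubK s (mem_iInter.mp hx ⟨s, hlt'⟩)
    · subst heq
      by_contra hf
      rw [hKdef] at hf
      simp only [mem_setOf_eq, not_le] at hf
      have hev : ∀ᶠ p in 𝓝 (x, t), l' < f p := hlsc (x, t) l' hf
      have htd : Tendsto (fun u : unitInterval => (x, u)) (𝓝 t) (𝓝 (x, t)) :=
        (continuous_const.prodMk continuous_id).tendsto t
      have hev2 : ∀ᶠ u in 𝓝 t, l' < f (x, u) := htd.eventually hev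
      have hnb : (𝓝[>] t).NeBot := nhdsGT_neBot_of_exists_gt ⟨1, ht⟩
      have h3 : ∀ᶠ u in 𝓝[>] t, l' < f (x, u) := hev2.filter_mono nhdsWithin_le_nhds
      obtain ⟨u, hu, hu_lt⟩ := (h3.and eventually_mem_nhdsWithin).exists
      have : x ∈ K u := hLsubK u (mem_iInter.mp hx ⟨u, hu_lt⟩)
      exact absurd this (not_le.mpr hu)
  -- R 0 and L 1 are nonempty
  have hR0 : (R 0).Nonempty := by
    obtain ⟨x, hx⟩ := hKne 0
    refine ⟨x, mem_iInter₂.mpr fun s hs => ?_⟩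
    have : s = 0 := le_antisymm hs s.2.1
    rwa [this]
  have hL1 : (L 1).Nonempty := by
    obtain ⟨x, hx⟩ := hKne 1
    refine ⟨x, mem_iInter₂.mpr fun s hs => ?_⟩
    have : s = 1 := le_antisymm s.2.2 hs
    rwa [this]
  -- define τ and σ as real sups/infs
  set SR : Set ℝ := (fun t : unitInterval => (t : ℝ)) '' {t | (R t).Nonempty} with hSRdef
  set SL : Set ℝ := (fun t : unitInterval => (t : ℝ)) '' {t | (L t).Nonempty} with hSLdef
  have hSRne : SR.Nonempty := ⟨(0 : unitInterval), ⟨0, hR0, rfl⟩⟩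
  have hSLne : SL.Nonempty := ⟨(1 : unitInterval), ⟨1, hL1, rfl⟩⟩
  have hSRbdd : BddAbove SR := ⟨1, by rintro r ⟨t, _, rfl⟩; exact t.2.2⟩
  have hSLbdd : BddBelow SL := ⟨0, by rintro r ⟨t, _, rfl⟩; exact t.2.1⟩
  set τr : ℝ := sSup SR with hτrdef
  set σr : ℝ := sInf SL with hσrdef
  have hτmem : τr ∈ Icc (0:ℝ) 1 := by
    constructor
    · exact le_csSup hSRbdd ⟨0, hR0, rfl⟩
    · exact csSup_le hSRne (by rintro r ⟨t, _, rfl⟩; exact t.2.2)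
  have hσmem : σr ∈ Icc (0:ℝ) 1 := by
    constructor
    · exact le_csInf hSLne (by rintro r ⟨t, _, rfl⟩; exact t.2.1)
    · exact csInf_le hSLbdd ⟨1, hL1, rfl⟩
  set τ : unitInterval := ⟨τr, hτmem⟩ with hτdef
  set σ : unitInterval := ⟨σr, hσmem⟩ with hσdef
  -- R is nonempty below τ, L nonempty above σ
  have hRbelow : ∀ s : unitInterval, s < τ → (R s).Nonempty := by
    intro s hs
    have hs' : (s : ℝ) < τr := hs
    obtain ⟨r, ⟨t, htne, rfl⟩, hr⟩ := exists_lt_of_lt_csSup hSRne hs'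
    have hst : s ≤ t := le_of_lt (by exact_mod_cast hr)
    exact htne.mono (hRmono hst)
  have hLabove : ∀ s : unitInterval, σ < s → (L s).Nonempty := by
    intro s hs
    have hs' : σr < (s : ℝ) := hs
    obtain ⟨r, ⟨t, htne, rfl⟩, hr⟩ := exists_lt_of_csInf_lt hSLne hs'
    have hst : t ≤ s := le_of_lt (by exact_mod_cast hr)
    exact htne.mono (hLmono hst)
  -- R τ nonempty
  have hRτ : (R τ).Nonempty := by
    rcases eq_or_lt_of_le (show (0:unitInterval) ≤ τ from τ.2.1) with h0 | h0
    · rw [← h0]; exact hR0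
    · exact hRlim τ h0 hRbelow
  have hLσ : (L σ).Nonempty := by
    rcases eq_or_lt_of_le (show σ ≤ (1:unitInterval) from σ.2.2) with h0 | h0
    · rw [h0]; exact hL1
    · exact hLlim σ h0 hLabove
  -- σ ≤ τ
  have hστ : σ ≤ τ := by
    by_contra hc
    rw [not_le] at hc
    obtain ⟨t, hτt, htσ⟩ := exists_between hc
    obtain ⟨x, hx⟩ := hKne t
    rcases hsplit t hx with hxL | hxR
    · have : σr ≤ (t : ℝ) := csInf_le hSLbdd ⟨t, ⟨x, hxL⟩, rfl⟩
      exact absurd htσ (not_lt.mpr (by exact_mod_cast this))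
    · have : (t : ℝ) ≤ τr := le_csSup hSRbdd ⟨t, ⟨x, hxR⟩, rfl⟩
      exact absurd hτt (not_lt.mpr (by exact_mod_cast this))
  have hLτ : (L τ).Nonempty := hLσ.mono (hLmono hστ)
  -- conclude: either L τ meets R τ (giving a global minimizer) or contradiction with connectedness
  have hglobal : (⋂ s, K s).Nonempty := by
    by_cases hdisj : (L τ ∩ R τ).Nonempty
    · obtain ⟨x, hxL, hxR⟩ := hdisj
      refine ⟨x, mem_iInter.mpr fun s => ?_⟩
      rcases le_total s τ with h | h
      · exact mem_iInter₂.mp hxR s h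
      · exact mem_iInter₂.mp hxL s h
    · exfalso
      rw [not_nonempty_iff_eq_empty] at hdisj
      obtain ⟨a, haR⟩ := hRτ
      obtain ⟨b, hbL⟩ := hLτ
      have haK : a ∈ K τ := hRsubK τ haR
      have hbK : b ∈ K τ := hLsubK τ hbL
      have hanL : a ∉ L τ := fun h =>
        (Set.eq_empty_iff_forall_notMem.mp hdisj a) ⟨h, haR⟩
      have hbnR : b ∉ R τ := fun h =>
        (Set.eq_empty_iff_forall_notMem.mp hdisj b) ⟨hbL, h⟩
      have hsub : K τ ⊆ (L τ)ᶜ ∪ (R τ)ᶜ := by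
        intro x hx
        by_contra hxc
        rw [mem_union, not_or, notMem_compl_iff, notMem_compl_iff] at hxc
        have : x ∈ L τ ∩ R τ := ⟨hxc.1, hxc.2⟩
        rw [hdisj] at this
        exact this
      obtain ⟨x, hxK, hxu, hxv⟩ := hKconn τ ((L τ)ᶜ) ((R τ)ᶜ)
        (hLc τ).isOpen_compl (hRc τ).isOpen_compl hsub ⟨a, haK, hanL⟩ ⟨b, hbK, hbnR⟩
      rcases hsplit τ hxK with h | h
      · exact hxu h
      · exact hxv h
  -- contradiction with h2
  obtain ⟨x, hx⟩ := hglobal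
  have hsup : (⨆ t : unitInterval, (f (x, t) : EReal)) ≤ (l' : EReal) :=
    iSup_le fun t => EReal.coe_le_coe_iff.mpr (mem_iInter.mp hx t)
  have : (⨅ x : X, ⨆ t : unitInterval, (f (x, t) : EReal)) ≤ (l' : EReal) :=
    le_trans (iInf_le _ x) hsup
  exact absurd h2 (not_lt.mpr this)
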